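/- For every q divisible by 3, there exists a q-solvable undirected graph on 4q/3 vertices with clique number 2q/3. -/

import Mathlib

/-- A directed graph (arc `u → v` meaning `v` sees `u`'s hat) is `q`-solvable if there
are guessing functions, each depending only on the hats the vertex sees, such that
every hat assignment is guessed correctly by some vertex. -/
def HatSolvable {V : Type*} (adj : V → V → Prop) (q : ℕ) : Prop :=
  ∃ f : V → ((V → Fin q) → Fin q),
    (∀ (v : V) (x y : V → Fin q), (∀ u, adj u v → x u = y u) → f v x = f v y) ∧
    ∀ x : V → Fin q, ∃ v, f v x = x v

namespace SolvableFT

/-- A winning strategy for the 3-color hat game on `K_{2,2}` (parts `{0,1}` and `{2,3}`).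
Vertex `i` guesses its own color from the colors of the two vertices of the other part. -/
def Fk : Fin 4 → (Fin 4 → Fin 3) → Fin 3
  | ⟨0, _⟩, y => ![![0, 0, 1], ![1, 0, 2], ![2, 1, 2]] (y 2) (y 3)
  | ⟨1, _⟩, y => ![![0, 1, 0], ![1, 2, 0], ![2, 2, 1]] (y 2) (y 3)
  | ⟨2, _⟩, y => ![![2, 2, 1], ![2, 1, 0], ![1, 0, 0]] (y 0) (y 1)
  | ⟨3, _⟩, y => ![![0, 2, 2], ![1, 0, 2], ![1, 1, 0]] (y 0) (y 1)

set_option maxHeartbeats 2000000 in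
lemma k22win : ∀ y : Fin 4 → Fin 3, ∃ i, Fk i y = y i := by decide

lemma Fk_local (i : Fin 4) (y z : Fin 4 → Fin 3)
    (h : ∀ u : Fin 4, u.val / 2 ≠ i.val / 2 → y u = z u) : Fk i y = Fk i z := by
  fin_cases i <;> simp only [Fk] <;>
    first
      | rw [h 2 (by decide), h 3 (by decide)]
      | rw [h 0 (by decide), h 1 (by decide)]

/-- The blow-up of `K_{2,2}` with cliques of size `m`:
groups `0,1` form one part, groups `2,3` the other part. -/
def HG (m : ℕ) : SimpleGraph (Fin 4 × Fin m) where
  Adj p q := p ≠ q ∧ (p.1 = q.1 ∨ p.1.val / 2 ≠ q.1.val / 2)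
  symm := ⟨fun p q ⟨h1, h2⟩ => ⟨Ne.symm h1, h2.imp Eq.symm Ne.symm⟩⟩
  loopless := ⟨fun p h => h.1 rfl⟩

variable (m : ℕ) [NeZero m]

/-- the "minor" part of the hat of vertex `(i,j)`, as an element of `ZMod m`. -/
def bv (x : Fin 4 × Fin m → Fin (3 * m)) (i : Fin 4) (j : Fin m) : ZMod m :=
  ((x (i, j)).val % m : ℕ)

/-- sum of the minor parts within group `i`. -/
def sv (x : Fin 4 × Fin m → Fin (3 * m)) (i : Fin 4) : ZMod m :=
  ∑ j, bv m x i j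

/-- the distinguished index in group `i`. -/
def sIdx (x : Fin 4 × Fin m → Fin (3 * m)) (i : Fin 4) : Fin m :=
  ⟨(sv m x i).val, ZMod.val_lt _⟩

/-- the "major" part of the hat of the distinguished vertex of group `i`. -/
def Av (x : Fin 4 × Fin m → Fin (3 * m)) (i : Fin 4) : Fin 3 :=
  ⟨(x (i, sIdx m x i)).val / m, by
    have := (x (i, sIdx m x i)).isLt
    exact Nat.div_lt_of_lt_mul (by omega)⟩

/-- the guessing function for the blow-up graph. -/
def guess (p : Fin 4 × Fin m) (x : Fin 4 × Fin m → Fin (3 * m)) : Fin (3 * m) :=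
  ⟨(Fk p.1 (Av m x)).val * m
      + (((p.2.val : ℕ) : ZMod m) - ∑ j' ∈ Finset.univ.erase p.2, bv m x p.1 j').val, by
    have h1 := (Fk p.1 (Av m x)).isLt
    have h2 := ZMod.val_lt
      (((p.2.val : ℕ) : ZMod m) - ∑ j' ∈ Finset.univ.erase p.2, bv m x p.1 j')
    nlinarith⟩

lemma HG_solvable (hm : 0 < m) : HatSolvable (HG m).Adj (3 * m) := by
  refine ⟨fun p x => guess m p x, ?_, ?_⟩
  · rintro ⟨g, j⟩ x y h
    have hb : ∀ (i : Fin 4) (j' : Fin m),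
        (i.val / 2 ≠ g.val / 2 ∨ (i = g ∧ j' ≠ j)) → x (i, j') = y (i, j') := by
      rintro i j' (hi | ⟨rfl, hj⟩)
      · refine h (i, j') ⟨?_, Or.inr hi⟩
        intro hc
        rw [Prod.mk.injEq] at hc
        exact hi (by rw [hc.1])
      · exact h (i, j') ⟨by simp [hj], Or.inl rfl⟩
    have hA : ∀ i : Fin 4, i.val / 2 ≠ g.val / 2 → Av m x i = Av m y i := by
      intro i hi
      have hx : ∀ j', x (i, j') = y (i, j') := fun j' => hb i j' (Or.inl hi)
      unfold Av sIdx sv bv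
      simp only [hx]
    have hFk : Fk g (Av m x) = Fk g (Av m y) := Fk_local g _ _ hA
    have ht : ∑ j' ∈ Finset.univ.erase j, bv m x g j'
        = ∑ j' ∈ Finset.univ.erase j, bv m y g j' := by
      refine Finset.sum_congr rfl fun j' hj' => ?_
      unfold bv
      rw [hb g j' (Or.inr ⟨rfl, (Finset.mem_erase.mp hj').1⟩)]
    apply Fin.ext
    show (Fk g (Av m x)).val * m + _ = (Fk g (Av m y)).val * m + _
    rw [hFk, ht]
  · intro x
    obtain ⟨g, hg⟩ := k22win (Av m x)
    refine ⟨(g, sIdx m x g), ?_⟩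
    have hT : ((((sIdx m x g).val : ℕ) : ZMod m)
        - ∑ j' ∈ Finset.univ.erase (sIdx m x g), bv m x g j') = bv m x g (sIdx m x g) := by
      have h1 : (((sIdx m x g).val : ℕ) : ZMod m) = sv m x g := ZMod.natCast_zmod_val _
      have h2 : ∑ j' ∈ Finset.univ.erase (sIdx m x g), bv m x g j'
          = sv m x g - bv m x g (sIdx m x g) :=
        eq_sub_of_add_eq' (Finset.add_sum_erase _ _ (Finset.mem_univ _))
      rw [h1, h2, sub_sub_cancel]
    apply Fin.ext
    show (Fk g (Av m x)).val * m + ZMod.val _ = (x (g, sIdx m x g)).val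
    rw [hg, hT]
    show (x (g, sIdx m x g)).val / m * m
        + (((((x (g, sIdx m x g)).val % m : ℕ)) : ZMod m)).val = _
    rw [ZMod.val_cast_of_lt (Nat.mod_lt _ hm)]
    exact Nat.div_add_mod' _ _

lemma HG_not_cliqueFree (hm : 0 < m) : ¬ (HG m).CliqueFree (2 * m) := by
  intro h
  refine h (({0, 2} : Finset (Fin 4)) ×ˢ Finset.univ) ⟨?_, ?_⟩
  · intro p hp q hq hne
    simp only [Finset.coe_product, Set.mem_prod, Finset.coe_insert, Set.mem_insert_iff,
      Finset.coe_singleton, Set.mem_singleton_iff] at hp hq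
    refine ⟨hne, ?_⟩
    rcases hp.1 with h1 | h1 <;> rcases hq.1 with h2 | h2
    · exact Or.inl (h1.trans h2.symm)
    · exact Or.inr (by rw [h1, h2]; decide)
    · exact Or.inr (by rw [h1, h2]; decide)
    · exact Or.inl (h1.trans h2.symm)
  · rw [Finset.card_product, Finset.card_univ, Fintype.card_fin,
      show ({0, 2} : Finset (Fin 4)).card = 2 from by decide]

omit [NeZero m] in
lemma HG_cliqueFree : (HG m).CliqueFree (2 * m + 1) := by
  classical
  intro S hS
  have key : ∀ P : Fin 4 × Fin m → Prop, (∀ p q, P p → P q → p.1.val / 2 = q.1.val / 2) →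
      ∀ hP : DecidablePred P, (S.filter P).card ≤ m := by
    intro P hP _
    calc (S.filter P).card ≤ (Finset.univ : Finset (Fin m)).card := by
          refine Finset.card_le_card_of_injOn (fun p => p.2)
            (fun _ _ => Finset.mem_univ _) ?_
          intro p hp q hq h2
          simp only [Finset.coe_filter, Set.mem_setOf_eq] at hp hq
          by_cases hpq : p = q
          · exact hpq
          · rcases (hS.1 hp.1 hq.1 hpq).2 with h1 | h1
            · exact Prod.ext h1 h2
            · exact absurd (hP p q hp.2 hq.2) h1
      _ = m := by rw [Finset.card_univ, Fintype.card_fin]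
  have h0 := key (fun p => p.1.val < 2)
    (fun p q hp hq => by omega) inferInstance
  have h1 := key (fun p => ¬ p.1.val < 2)
    (fun p q hp hq => by
      have := p.1.isLt; have := q.1.isLt; omega) inferInstance
  have hsum := Finset.card_filter_add_card_filter_not
    (s := S) (p := fun p : Fin 4 × Fin m => p.1.val < 2)
  have hcard := hS.2
  omega

end SolvableFT

/-- For any $q$ divisible by 3 there is a $q$-solvable graph on $4q/3$ vertices with
clique number $2q/3$. -/
theorem solvable_four_thirds (q : ℕ) (hq : 0 < q) (h3 : 3 ∣ q) :
    ∃ G : SimpleGraph (Fin (4 * q / 3)),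
      HatSolvable G.Adj q ∧ ¬ G.CliqueFree (2 * q / 3) ∧ G.CliqueFree (2 * q / 3 + 1) := by
  obtain ⟨m, rfl⟩ := h3
  have hm : 0 < m := by omega
  haveI : NeZero m := ⟨hm.ne'⟩
  have h1 : 4 * (3 * m) / 3 = 4 * m := by omega
  have h2 : 2 * (3 * m) / 3 = 2 * m := by omega
  rw [h1, h2]
  let e : Fin (4 * m) ≃ Fin 4 × Fin m := finProdFinEquiv.symm
  let iso := SimpleGraph.Iso.comap e (SolvableFT.HG m)
  refine ⟨(SolvableFT.HG m).comap ⇑e.toEmbedding, ?_, ?_, ?_⟩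
  · obtain ⟨f, hloc, hwin⟩ := SolvableFT.HG_solvable m hm
    refine ⟨fun w x => f (e w) (fun p => x (e.symm p)), ?_, ?_⟩
    · intro v x y h
      apply hloc
      intro u hu
      refine h (e.symm u) ?_
      show (SolvableFT.HG m).Adj (e (e.symm u)) (e v)
      rwa [Equiv.apply_symm_apply]
    · intro x
      obtain ⟨p, hp⟩ := hwin (fun p => x (e.symm p))
      refine ⟨e.symm p, ?_⟩
      show f (e (e.symm p)) _ = x (e.symm p)
      rw [Equiv.apply_symm_apply]
      exact hp
  · intro h
    exact SolvableFT.HG_not_cliqueFree m hm (h.comap iso.symm.toEmbedding.isContained)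
  · exact (SolvableFT.HG_cliqueFree m).comap iso.toEmbedding.isContained
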